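/- Let a, b ≥ 0, η > 0, α > 0, and suppose |a − b| ≤ η·√a. Then a ≤ (1+α)·b + (1 + 1/α)·η², and b ≤ ((2α+1)/(1+α))·a + (1 + 1/α)·η². -/

import Mathlib

theorem stmt_9 (a b η α : ℝ) (ha : 0 ≤ a) (hb : 0 ≤ b) (hη : 0 < η) (hα : 0 < α)
    (h : |a - b| ≤ η * Real.sqrt a) :
    a ≤ (1 + α) * b + (1 + 1 / α) * η ^ 2 ∧
    b ≤ ((2 * α + 1) / (1 + α)) * a + (1 + 1 / α) * η ^ 2 := by
  have hs : Real.sqrt a ^ 2 = a := Real.sq_sqrt ha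
  have hs0 : 0 ≤ Real.sqrt a := Real.sqrt_nonneg a
  obtain ⟨h1, h2⟩ := abs_le.mp h
  have hα1 : (0:ℝ) < 1 + α := by linarith
  set c : ℝ := 1 / α with hcdef
  have hc0 : 0 < c := by positivity
  have hcα : α * c = 1 := by rw [hcdef]; field_simp
  set d : ℝ := (2 * α + 1) / (1 + α) with hddef
  have hd1 : (1 + α) * d = 2 * α + 1 := by rw [hddef]; field_simp
  have hd2 : 1 ≤ d := by
    rw [hddef, le_div_iff₀ hα1]; linarith
  by_cases hc : Real.sqrt a ≤ (1 + c) * η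
  · have hk : η * Real.sqrt a ≤ (1 + c) * η ^ 2 := by nlinarith
    constructor
    · nlinarith [sq_nonneg η, mul_nonneg hα.le hb]
    · nlinarith [sq_nonneg η, mul_nonneg (sub_nonneg.mpr hd2) ha]
  · push_neg at hc
    have hsp : 0 < Real.sqrt a := lt_of_le_of_lt (by positivity) hc
    have hkey : η * Real.sqrt a * (1 + α) < α * a := by
      nlinarith [mul_lt_mul_of_pos_left hc hsp, mul_lt_mul_of_pos_left hc hα]
    constructor
    · nlinarith [mul_pos (by linarith : (0:ℝ) < 1 + c) (pow_pos hη 2), hα1]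
    · have : (1 + α) * b ≤ (1 + α) * (d * a) := by nlinarith
      nlinarith [mul_pos (by linarith : (0:ℝ) < 1 + c) (pow_pos hη 2),
        (mul_le_mul_iff_right₀ hα1).mp this]
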